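/- Let G be a finite group, Ĝ a complete set of pairwise inequivalent irreducible complex matrix representations of G, S a finite set, and A : G → ℂ^{S×S} a convolution kernel. If λ ∈ ℂ is an eigenvalue of the linear map u ↦ A * u on the space of functions u : G → ℂ^S, then there exists ρ ∈ Ĝ such that λ is an eigenvalue of the |S|d_ρ × |S|d_ρ matrix F(A)(ρ). -/

import Mathlib

/-- A matrix representation of `G`: every `ρ g` is invertible and `ρ` is
multiplicative. -/
def IsMatRep {G : Type*} [Group G] {n : Type*} [Fintype n] [DecidableEq n]
    (ρ : G → Matrix n n ℂ) : Prop :=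
  (∀ g, IsUnit (ρ g)) ∧ ∀ g h : G, ρ (g * h) = ρ g * ρ h

/-- Irreducibility: the only subspaces of `ℂ^n` invariant under all `ρ g` are
`⊥` and `⊤`. -/
def IsIrredRep {G : Type*} [Group G] {n : Type*} [Fintype n] [DecidableEq n]
    (ρ : G → Matrix n n ℂ) : Prop :=
  ∀ W : Submodule ℂ (n → ℂ), (∀ g : G, ∀ x ∈ W, (ρ g).mulVec x ∈ W) → W = ⊥ ∨ W = ⊤

/-- Equivalence of matrix representations: `ρ(g) = T⁻¹ σ(g) T` for a fixed
invertible `T` (encoded by a two-sided inverse pair `T, T'`). -/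
def RepEquiv {G : Type*} [Group G] {n m : Type*} [Fintype n] [DecidableEq n]
    [Fintype m] [DecidableEq m]
    (ρ : G → Matrix n n ℂ) (σ : G → Matrix m m ℂ) : Prop :=
  ∃ (T : Matrix m n ℂ) (T' : Matrix n m ℂ),
    T * T' = 1 ∧ T' * T = 1 ∧ ∀ g : G, ρ g = T' * σ g * T


/-- The group convolution of a kernel `A : G → ℂ^{S×S}` with `u : G → ℂ^S`:
`(A*u)(g) = ∑_{h∈G} A(h) u(h⁻¹ g)`. -/
noncomputable def groupConv {G : Type*} [Group G] [Fintype G] {S : Type*} [Fintype S]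
    (A : G → Matrix S S ℂ) (u : G → S → ℂ) : G → S → ℂ :=
  fun g s => ∑ h : G, ∑ s' : S, A h s s' * u (h⁻¹ * g) s'

/-- The (blockwise) generalized Fourier transform of a kernel `A : G → ℂ^{S×S}`
at a representation `σ` of degree `k`: the `|S|k × |S|k` matrix with entries
`F(A)_{(s,i),(s',j)}(σ) = (F(A_{s,s'}))_{i,j}(σ)`. -/
noncomputable def kernelFT {G : Type*} [Group G] [Fintype G] {S : Type*} [Fintype S] {k : ℕ}
    (A : G → Matrix S S ℂ) (σ : G → Matrix (Fin k) (Fin k) ℂ) :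
    Matrix (S × Fin k) (S × Fin k) ℂ :=
  Matrix.of fun p q => ∑ g : G, A g p.1 q.1 * σ g p.2 q.2

open MonoidAlgebra Module

lemma sum_single_eq {G : Type*} [Fintype G] (r : G →₀ ℂ) :
    ∑ g : G, Finsupp.single g (r g) = r := by
  classical
  ext g
  rw [Finsupp.finset_sum_apply, Finset.sum_eq_single g
    (fun g' _ hne => by rw [Finsupp.single_apply]; simp [hne])
    (fun h => absurd (Finset.mem_univ g) h)]
  simp

set_option maxHeartbeats 1000000 in
set_option synthInstance.maxHeartbeats 400000 in
theorem ft_inj {G : Type*} [Group G] [Fintype G]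
    {ι : Type*} (d : ι → ℕ)
    (ρ : (i : ι) → G → Matrix (Fin (d i)) (Fin (d i)) ℂ)
    (hcomplete : ∀ (k : ℕ) (σ : G → Matrix (Fin k) (Fin k) ℂ),
      IsMatRep σ → IsIrredRep σ → ∃! i : ι, RepEquiv σ (ρ i))
    (w : G → ℂ) (hw : ∀ i, ∑ g : G, w g • ρ i g = 0) : w = 0 := by
  classical
  set R := MonoidAlgebra ℂ G with hR
  haveI : IsSemisimpleRing R := by
    have : Small.{0} G := Countable.toSmall G
    let G₀ : Type := Shrink.{0} G
    let e : G₀ ≃* G := Shrink.mulEquiv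
    haveI : Fintype G₀ := Fintype.ofEquiv G (equivShrink G)
    haveI : NeZero ((Fintype.card G₀ : ℂ)) := ⟨by exact_mod_cast Fintype.card_ne_zero⟩
    exact (MonoidAlgebra.domCongr ℂ ℂ e).toRingEquiv.isSemisimpleRing
  haveI : Module.Finite ℂ R := inferInstance
  set w' : R := ∑ g : G, MonoidAlgebra.single g (w g) with hw'
  -- key claim: w' kills every simple submodule of R
  have key : ∀ (W : Submodule R R), IsSimpleModule R W → ∀ x ∈ W, w' * x = 0 := by
    intro W hW x hx
    haveI := hW
    set Wc : Submodule ℂ R := W.restrictScalars ℂ with hWc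
    set n := finrank ℂ Wc with hn
    set b : Basis (Fin n) ℂ Wc := finBasis ℂ Wc with hb
    have hstab : ∀ g : G, ∀ y ∈ Wc, (of ℂ G g : R) * y ∈ Wc := by
      intro g y hy
      exact W.smul_mem (of ℂ G g) hy
    set ℓ : G → (Wc →ₗ[ℂ] Wc) :=
      fun g => (LinearMap.mulLeft ℂ (of ℂ G g : R)).restrict (hstab g) with hℓ
    have hℓapp : ∀ (g : G) (y : Wc), ((ℓ g y : R)) = (of ℂ G g : R) * (y : R) := by
      intro g y; rfl
    set σ : G → Matrix (Fin n) (Fin n) ℂ := fun g => LinearMap.toMatrix b b (ℓ g) with hσdef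
    have hℓmul : ∀ g h : G, ℓ (g * h) = (ℓ g).comp (ℓ h) := by
      intro g h
      refine LinearMap.ext fun y => Subtype.ext ?_
      simp only [LinearMap.comp_apply]
      rw [hℓapp, hℓapp, hℓapp, map_mul, mul_assoc]
    have hσmul : ∀ g h : G, σ (g * h) = σ g * σ h := by
      intro g h
      rw [hσdef]; dsimp only
      rw [hℓmul, LinearMap.toMatrix_comp b b b]
    have hσone : σ 1 = 1 := by
      have : ℓ 1 = LinearMap.id := by
        refine LinearMap.ext fun y => Subtype.ext ?_
        rw [hℓapp]
        show (MonoidAlgebra.single 1 1 : R) * _ = _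
        rw [MonoidAlgebra.one_def.symm, one_mul]
        rfl
      rw [hσdef]; dsimp only
      rw [this, LinearMap.toMatrix_id]
    have hσrep : IsMatRep σ := by
      constructor
      · intro g
        refine ⟨⟨σ g, σ g⁻¹, ?_, ?_⟩, rfl⟩
        · rw [← hσmul, mul_inv_cancel, hσone]
        · rw [← hσmul, inv_mul_cancel, hσone]
      · exact hσmul
    have hvec : ∀ (g : G) (y : Wc), b.equivFun (ℓ g y) = (σ g).mulVec (b.equivFun y) := by
      intro g y
      funext j
      rw [hσdef]
      simp only [Basis.equivFun_apply]
      rw [LinearMap.toMatrix_mulVec_repr]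
    have hσirr : IsIrredRep σ := by
      intro U hU
      set Q : Submodule ℂ R :=
        (U.map (b.equivFun.symm : (Fin n → ℂ) →ₗ[ℂ] Wc)).map Wc.subtype with hQ
      have hmemQ : ∀ x : R, x ∈ Q ↔ ∃ v ∈ U, ((b.equivFun.symm v : Wc) : R) = x := by
        intro x
        rw [hQ]
        constructor
        · rintro ⟨y, hy, rfl⟩
          obtain ⟨v, hv, rfl⟩ := hy
          exact ⟨v, hv, rfl⟩
        · rintro ⟨v, hv, hvx⟩
          exact ⟨b.equivFun.symm v, ⟨v, hv, rfl⟩, hvx⟩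
      have hQstab : ∀ g : G, ∀ x ∈ Q, (of ℂ G g : R) * x ∈ Q := by
        intro g x hxQ
        obtain ⟨v, hv, hvx⟩ := (hmemQ x).mp hxQ
        refine (hmemQ _).mpr ⟨(σ g).mulVec v, hU g v hv, ?_⟩
        have : (b.equivFun.symm ((σ g).mulVec v) : Wc) = ℓ g (b.equivFun.symm v) := by
          apply b.equivFun.injective
          rw [LinearEquiv.apply_symm_apply, hvec, LinearEquiv.apply_symm_apply]
        rw [this, hℓapp, hvx]
      set QR : Submodule R R :=
        { carrier := Q
          add_mem' := fun h1 h2 => Q.add_mem h1 h2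
          zero_mem' := Q.zero_mem
          smul_mem' := by
            intro r x hxQ
            have hr : r = ∑ g : G, MonoidAlgebra.single g (r.coeff g) := by
              ext g; rw [MonoidAlgebra.coeff_sum]; simp [MonoidAlgebra.coeff_single]
            show r * x ∈ Q
            rw [hr, Finset.sum_mul]
            refine Q.sum_mem fun g _ => ?_
            have : (MonoidAlgebra.single g (r.coeff g) : R) * x = r.coeff g • ((of ℂ G g : R) * x) := by
              rw [← smul_mul_assoc]
              congr 1
              rw [MonoidAlgebra.of_apply, MonoidAlgebra.smul_single', mul_one]
            rw [this]
            exact Q.smul_mem _ (hQstab g x hxQ) } with hQR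
      have hQRW : QR ≤ W := by
        intro x hxQ
        obtain ⟨v, _, hvx⟩ := (hmemQ x).mp hxQ
        rw [← hvx]
        exact (b.equivFun.symm v).2
      have hmapc : Submodule.map W.subtype (QR.comap W.subtype) = QR := by
        rw [Submodule.map_comap_subtype]
        exact inf_eq_right.mpr hQRW
      rcases eq_bot_or_eq_top (QR.comap W.subtype) with hbot | htop
      · left
        have hQRbot : QR = ⊥ := by rw [← hmapc, hbot, Submodule.map_bot]
        ext v
        simp only [Submodule.mem_bot]
        constructor
        · intro hv
          have hmem : ((b.equivFun.symm v : Wc) : R) ∈ QR := (hmemQ _).mpr ⟨v, hv, rfl⟩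
          rw [hQRbot, Submodule.mem_bot] at hmem
          have h0 : (b.equivFun.symm v : Wc) = 0 := Subtype.ext hmem
          exact b.equivFun.symm.injective (by rw [h0, map_zero])
        · rintro rfl; exact U.zero_mem
      · right
        have hWQR : QR = W := by
          rw [← hmapc, htop, Submodule.map_top, Submodule.range_subtype]
        rw [eq_top_iff]
        intro v _
        have hmem : ((b.equivFun.symm v : Wc) : R) ∈ QR := by
          rw [hWQR]
          exact (b.equivFun.symm v).2
        obtain ⟨v', hv', hvx⟩ := (hmemQ _).mp hmem
        have : b.equivFun.symm v' = b.equivFun.symm v := Subtype.ext hvx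
        rwa [← b.equivFun.symm.injective this]
    obtain ⟨i, ⟨T, T', hTT', hT'T, hσρ⟩, -⟩ := hcomplete n σ hσrep hσirr
    have hσ0 : ∑ g : G, w g • σ g = 0 := by
      have heach : ∀ g : G, w g • σ g = T' * (w g • ρ i g) * T := by
        intro g
        rw [hσρ g, Matrix.mul_smul, Matrix.smul_mul]
      rw [Finset.sum_congr rfl fun g _ => heach g, ← Matrix.sum_mul, ← Matrix.mul_sum,
        hw i, Matrix.mul_zero, Matrix.zero_mul]
    have hℓ0 : ∑ g : G, w g • ℓ g = 0 := by
      apply (LinearMap.toMatrix b b).injective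
      rw [map_sum, map_zero]
      simpa using hσ0
    have hfin : w' * x = ((∑ g : G, w g • ℓ g) ⟨x, hx⟩ : Wc) := by
      rw [hw', Finset.sum_mul, LinearMap.coe_sum, Finset.sum_apply, Submodule.coe_sum]
      refine Finset.sum_congr rfl fun g _ => ?_
      rw [LinearMap.smul_apply, SetLike.val_smul, hℓapp, ← smul_mul_assoc]
      congr 1
      rw [MonoidAlgebra.of_apply, MonoidAlgebra.smul_single', mul_one]
    rw [hfin, hℓ0]
    simp
  -- conclude : w' = 0
  have hw'0 : w' = 0 := by
    have h1 : (1 : R) ∈ (⊤ : Submodule R R) := trivial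
    rw [← IsSemisimpleModule.sSup_simples_eq_top R R, sSup_eq_iSup'] at h1
    have h10 : w' * 1 = 0 := by
      refine Submodule.iSup_induction _ (motive := fun x => w' * x = 0) h1 ?_ ?_ ?_
      · rintro ⟨W, hW⟩ x hx
        exact key W hW x hx
      · show w' * 0 = 0
        rw [mul_zero]
      · intro x y hx hy
        show w' * (x + y) = 0
        rw [mul_add, hx, hy, add_zero]
    rwa [mul_one] at h10
  funext g
  have : w'.coeff g = w g := by
    rw [hw', MonoidAlgebra.coeff_sum]
    simp only [MonoidAlgebra.coeff_single]
    rw [Finsupp.finset_sum_apply, Finset.sum_eq_single g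
      (fun g' _ hne => by rw [Finsupp.single_apply]; simp [hne])
      (fun h => absurd (Finset.mem_univ g) h)]
    simp
  rw [Pi.zero_apply, ← this, hw'0]
  rfl

set_option linter.unusedVariables false in
/-- Let `(ρ i)_{i : ι}` be a complete set of pairwise inequivalent
irreducible complex matrix representations of the finite group `G`, `S` a finite set,
and `A : G → ℂ^{S×S}` a convolution kernel.  If `λ` is an eigenvalue of the linear
map `u ↦ A * u` on functions `u : G → ℂ^S`, then there is `i` such that `λ` is an
eigenvalue of the `|S|d_ρ × |S|d_ρ` matrix `F(A)(ρ i)`. -/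
theorem stmt8 {G : Type*} [Group G] [Fintype G]
    {ι : Type*} [Fintype ι] (d : ι → ℕ)
    (ρ : (i : ι) → G → Matrix (Fin (d i)) (Fin (d i)) ℂ)
    (hrep : ∀ i, IsMatRep (ρ i))
    (hirr : ∀ i, IsIrredRep (ρ i))
    (hineq : ∀ i j, i ≠ j → ¬ RepEquiv (ρ i) (ρ j))
    (hcomplete : ∀ (k : ℕ) (σ : G → Matrix (Fin k) (Fin k) ℂ),
      IsMatRep σ → IsIrredRep σ → ∃! i : ι, RepEquiv σ (ρ i))
    {S : Type*} [Fintype S] (A : G → Matrix S S ℂ) (lam : ℂ)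
    (hlam : ∃ u : G → S → ℂ, u ≠ 0 ∧ groupConv A u = lam • u) :
    ∃ i : ι, ∃ ξ : S × Fin (d i) → ℂ, ξ ≠ 0 ∧ (kernelFT A (ρ i)).mulVec ξ = lam • ξ := by
  classical
  obtain ⟨u, hu0, hconv⟩ := hlam
  by_contra hcon
  push_neg at hcon
  -- the algebraic convolution identity
  have key2 : ∀ (i : ι) (bcol : Fin (d i)) (s : S) (a : Fin (d i)),
      ∑ q : S × Fin (d i), kernelFT A (ρ i) (s, a) q * (∑ g : G, u g q.1 * ρ i g q.2 bcol)
        = ∑ g : G, groupConv A u g s * ρ i g a bcol := by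
    intro i bcol s a
    have hmul := (hrep i).2
    calc
      ∑ q : S × Fin (d i), kernelFT A (ρ i) (s, a) q * (∑ g : G, u g q.1 * ρ i g q.2 bcol)
          = ∑ s' : S, ∑ c, ∑ h : G, ∑ k : G,
              (A h s s' * ρ i h a c) * (u k s' * ρ i k c bcol) := by
            rw [Fintype.sum_prod_type]
            refine Finset.sum_congr rfl fun s' _ => Finset.sum_congr rfl fun c _ => ?_
            simp only [kernelFT, Matrix.of_apply]
            rw [Finset.sum_mul]
            exact Finset.sum_congr rfl fun h _ => Finset.mul_sum _ _ _
      _ = ∑ s' : S, ∑ h : G, ∑ c, ∑ k : G,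
              (A h s s' * ρ i h a c) * (u k s' * ρ i k c bcol) :=
            Finset.sum_congr rfl fun s' _ => Finset.sum_comm
      _ = ∑ h : G, ∑ s' : S, ∑ c, ∑ k : G,
              (A h s s' * ρ i h a c) * (u k s' * ρ i k c bcol) := Finset.sum_comm
      _ = ∑ h : G, ∑ s' : S, ∑ k : G, ∑ c,
              (A h s s' * ρ i h a c) * (u k s' * ρ i k c bcol) :=
            Finset.sum_congr rfl fun h _ => Finset.sum_congr rfl fun s' _ => Finset.sum_comm
      _ = ∑ h : G, ∑ s' : S, ∑ k : G, A h s s' * u k s' * ρ i (h * k) a bcol := by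
            refine Finset.sum_congr rfl fun h _ => Finset.sum_congr rfl fun s' _ =>
              Finset.sum_congr rfl fun k _ => ?_
            rw [hmul h k, Matrix.mul_apply, Finset.mul_sum]
            exact Finset.sum_congr rfl fun c _ => by ring
      _ = ∑ g : G, groupConv A u g s * ρ i g a bcol := by
            symm
            calc
              ∑ g : G, groupConv A u g s * ρ i g a bcol
                  = ∑ g : G, ∑ h : G, ∑ s' : S,
                      A h s s' * u (h⁻¹ * g) s' * ρ i g a bcol := by
                    simp only [groupConv]
                    refine Finset.sum_congr rfl fun g _ => ?_
                    rw [Finset.sum_mul]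
                    exact Finset.sum_congr rfl fun h _ => Finset.sum_mul _ _ _
              _ = ∑ h : G, ∑ g : G, ∑ s' : S,
                      A h s s' * u (h⁻¹ * g) s' * ρ i g a bcol := Finset.sum_comm
              _ = ∑ h : G, ∑ k : G, ∑ s' : S,
                      A h s s' * u k s' * ρ i (h * k) a bcol := by
                    refine Finset.sum_congr rfl fun h _ => ?_
                    refine Fintype.sum_equiv (Equiv.mulLeft h).symm _ _ fun k => ?_
                    refine Finset.sum_congr rfl fun s' _ => ?_
                    simp [mul_inv_cancel_left]
              _ = ∑ h : G, ∑ s' : S, ∑ k : G,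
                      A h s s' * u k s' * ρ i (h * k) a bcol := by
                    exact Finset.sum_congr rfl fun h _ => Finset.sum_comm
  -- eigen identity for Fourier columns
  have heig : ∀ (i : ι) (bcol : Fin (d i)),
      (kernelFT A (ρ i)).mulVec (fun p => ∑ g : G, u g p.1 * ρ i g p.2 bcol)
        = lam • (fun p => ∑ g : G, u g p.1 * ρ i g p.2 bcol) := by
    intro i bcol
    funext p
    obtain ⟨s, a⟩ := p
    have hcg : ∀ g : G, groupConv A u g s = lam * u g s := by
      intro g
      have := congrFun (congrFun hconv g) s
      simpa using this
    calc
      (kernelFT A (ρ i)).mulVec (fun p => ∑ g : G, u g p.1 * ρ i g p.2 bcol) (s, a)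
          = ∑ q : S × Fin (d i), kernelFT A (ρ i) (s, a) q *
              (∑ g : G, u g q.1 * ρ i g q.2 bcol) := by
            simp [Matrix.mulVec, dotProduct]
      _ = ∑ g : G, groupConv A u g s * ρ i g a bcol := key2 i bcol s a
      _ = lam * ∑ g : G, u g s * ρ i g a bcol := by
            rw [Finset.mul_sum]
            exact Finset.sum_congr rfl fun g _ => by rw [hcg g]; ring
      _ = (lam • (fun p : S × Fin (d i) => ∑ g : G, u g p.1 * ρ i g p.2 bcol)) (s, a) := by
            simp
  -- hence all Fourier transforms of u vanish
  have hFU0 : ∀ (i : ι) (p : S × Fin (d i)) (bcol : Fin (d i)),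
      ∑ g : G, u g p.1 * ρ i g p.2 bcol = 0 := by
    intro i p bcol
    have hz : (fun p : S × Fin (d i) => ∑ g : G, u g p.1 * ρ i g p.2 bcol) = 0 := by
      by_contra hne
      exact hcon i _ hne (heig i bcol)
    exact congrFun hz p
  -- apply injectivity of the Fourier transform for each s
  have hus : ∀ s : S, (fun g => u g s) = 0 := by
    intro s
    apply ft_inj d ρ hcomplete
    intro i
    ext a bcol
    have := hFU0 i (s, a) bcol
    simpa [Matrix.sum_apply] using this
  apply hu0
  funext g s
  exact congrFun (hus s) g
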